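/- If a sequence L(t) of nonnegative reals satisfies the drift condition E[V(L(t+1)) − V(L(t)) | L(t)] ≤ −ε·‖L(t)‖ + K for all L(t) with ‖L(t)‖ > B, and the drift is bounded by C < ∞ when ‖L(t)‖ ≤ B, then limsup_{t→∞} (1/t)·Σ_{τ<t} E[‖L(τ)‖] ≤ (K + C + εB)/ε, i.e. the system is strongly stable. -/

import Mathlib

open MeasureTheory Filter

/-- Foster–Lyapunov strong stability: if the expected Lyapunov drift is at most
`−ε·‖L(t)‖ + K` whenever `‖L(t)‖ > B` and at most `C` otherwise, then the
time-averaged expected total queue length satisfies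
`limsup (1/t)·Σ_{τ<t} E[‖L(τ)‖] ≤ (K + C + εB)/ε`. -/
theorem stmt8 {Ω : Type*} [MeasurableSpace Ω] (μ : Measure Ω) [IsProbabilityMeasure μ]
    (L V : ℕ → Ω → ℝ)
    (hLnn : ∀ t ω, 0 ≤ L t ω) (hVnn : ∀ t ω, 0 ≤ V t ω)
    (hLmeas : ∀ t, Measurable (L t)) (hVmeas : ∀ t, Measurable (V t))
    (hLint : ∀ t, Integrable (L t) μ) (hVint : ∀ t, Integrable (V t) μ)
    (ε B K C : ℝ) (hε : 0 < ε) (hB : 0 ≤ B) (hK : 0 ≤ K) (hC : 0 ≤ C)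
    (hdrift : ∀ t, ∫ ω, (V (t + 1) ω - V t ω) ∂μ ≤
        ∫ ω, (if B < L t ω then -ε * L t ω + K else C) ∂μ) :
    Filter.limsup
        (fun t : ℕ => (1 / (t : ℝ)) * ∑ τ ∈ Finset.range t, ∫ ω, L τ ω ∂μ)
        Filter.atTop
      ≤ (K + C + ε * B) / ε := by
  set c : ℝ := K + C + ε * B with hc
  have hc0 : 0 ≤ c := by positivity
  -- step inequality
  have step : ∀ t : ℕ, (∫ ω, V (t + 1) ω ∂μ) - ∫ ω, V t ω ∂μ ≤
      -ε * (∫ ω, L t ω ∂μ) + c := by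
    intro t
    have hint1 : Integrable (fun ω => if B < L t ω then -ε * L t ω + K else C) μ := by
      apply Integrable.mono' ((hLint t).const_mul ε |>.add (integrable_const (K + C)))
      · refine Measurable.aestronglyMeasurable ?_
        exact Measurable.ite (measurableSet_lt measurable_const (hLmeas t))
          (((hLmeas t).const_mul (-ε)).add_const K) measurable_const
      · refine Filter.Eventually.of_forall fun ω => ?_
        simp only [Pi.add_apply, Real.norm_eq_abs]
        by_cases h : B < L t ω <;> simp only [h, if_true, if_false]
        · rw [abs_le]
          constructor <;> nlinarith [hLnn t ω]
        · rw [abs_of_nonneg hC]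
          nlinarith [hLnn t ω]
    have hmono : (∫ ω, (if B < L t ω then -ε * L t ω + K else C) ∂μ) ≤
        ∫ ω, (-ε * L t ω + c) ∂μ := by
      apply integral_mono hint1 (((hLint t).const_mul (-ε)).add (integrable_const c))
      intro ω
      simp only [Pi.add_apply, hc]
      by_cases h : B < L t ω <;> simp only [h, if_true, if_false]
      · nlinarith [hLnn t ω]
      · push_neg at h; nlinarith
    have h2 : (∫ ω, (-ε * L t ω + c) ∂μ) = -ε * (∫ ω, L t ω ∂μ) + c := by
      rw [integral_add ((hLint t).const_mul (-ε)) (integrable_const c),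
        integral_const_mul, integral_const, probReal_univ]
      simp
    have := hdrift t
    rw [integral_sub (hVint (t + 1)) (hVint t)] at this
    linarith
  -- summed inequality
  have summed : ∀ t : ℕ, ε * (∑ τ ∈ Finset.range t, ∫ ω, L τ ω ∂μ) ≤
      (∫ ω, V 0 ω ∂μ) + t * c := by
    intro t
    have htel : (∑ τ ∈ Finset.range t, ((∫ ω, V (τ + 1) ω ∂μ) - ∫ ω, V τ ω ∂μ)) =
        (∫ ω, V t ω ∂μ) - ∫ ω, V 0 ω ∂μ :=
      Finset.sum_range_sub (fun n => ∫ ω, V n ω ∂μ) t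
    have hsum : (∫ ω, V t ω ∂μ) - (∫ ω, V 0 ω ∂μ) ≤
        ∑ τ ∈ Finset.range t, (-ε * (∫ ω, L τ ω ∂μ) + c) := by
      rw [← htel]
      exact Finset.sum_le_sum fun τ _ => step τ
    rw [Finset.sum_add_distrib, ← Finset.mul_sum, Finset.sum_const, Finset.card_range,
      nsmul_eq_mul] at hsum
    have hVt : 0 ≤ ∫ ω, V t ω ∂μ := integral_nonneg (hVnn t)
    nlinarith [hsum]
  -- eventual bound
  have hbound : ∀ᶠ t : ℕ in atTop,
      (1 / (t : ℝ)) * ∑ τ ∈ Finset.range t, ∫ ω, L τ ω ∂μ ≤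
        (∫ ω, V 0 ω ∂μ) / ε * (1 / t) + c / ε := by
    filter_upwards [Filter.eventually_ge_atTop 1] with t ht
    have ht0 : (0 : ℝ) < t := by exact_mod_cast ht
    have h := summed t
    have hS : (∑ τ ∈ Finset.range t, ∫ ω, L τ ω ∂μ) ≤ ((∫ ω, V 0 ω ∂μ) + t * c) / ε := by
      rw [le_div_iff₀ hε]; linarith
    calc (1 / (t : ℝ)) * ∑ τ ∈ Finset.range t, ∫ ω, L τ ω ∂μ
        ≤ (1 / (t : ℝ)) * (((∫ ω, V 0 ω ∂μ) + t * c) / ε) := by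
          exact mul_le_mul_of_nonneg_left hS (by positivity)
      _ = (∫ ω, V 0 ω ∂μ) / ε * (1 / t) + c / ε := by
          field_simp
  -- conclude via limsup comparison
  have hg : Tendsto (fun t : ℕ => (∫ ω, V 0 ω ∂μ) / ε * (1 / (t : ℝ)) + c / ε)
      atTop (nhds (c / ε)) := by
    have h0 : Tendsto (fun t : ℕ => (1 : ℝ) / t) atTop (nhds 0) :=
      tendsto_one_div_atTop_nhds_zero_nat
    have := (h0.const_mul ((∫ ω, V 0 ω ∂μ) / ε)).add_const (c / ε)
    simpa using this
  have hle : Filter.limsup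
      (fun t : ℕ => (1 / (t : ℝ)) * ∑ τ ∈ Finset.range t, ∫ ω, L τ ω ∂μ) atTop ≤
      Filter.limsup (fun t : ℕ => (∫ ω, V 0 ω ∂μ) / ε * (1 / (t : ℝ)) + c / ε) atTop := by
    have hcb : Filter.IsCoboundedUnder (· ≤ ·) atTop
        (fun t : ℕ => (1 / (t : ℝ)) * ∑ τ ∈ Finset.range t, ∫ ω, L τ ω ∂μ) := by
      apply Filter.IsBoundedUnder.isCoboundedUnder_le
      refine ⟨0, Filter.eventually_map.2 (Filter.Eventually.of_forall fun t => ?_)⟩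
      have : 0 ≤ ∑ τ ∈ Finset.range t, ∫ ω, L τ ω ∂μ :=
        Finset.sum_nonneg fun τ _ => integral_nonneg (hLnn τ)
      positivity
    exact Filter.limsup_le_limsup hbound hcb hg.isBoundedUnder_le
  rw [hg.limsup_eq] at hle
  exact hle
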